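/- Let m ≥ 2 be an integer such that m is odd or 3m > 2n (i.e. m is not of the form 2k with 3k ≤ n). Then every positive root of D_{n+1} whose height is divisible by m can be written as a sum of roots of height exactly m. -/
import Mathlib

noncomputable section

def eps (N : ℕ) (i : Fin N) : Fin N → ℝ := fun j => if j = i then 1 else 0

def Droots (n : ℕ) : Set (Fin (n + 1) → ℝ) :=
  {v | ∃ i j : Fin (n + 1), i < j ∧
        (v = eps (n + 1) j - eps (n + 1) i ∨ v = -(eps (n + 1) j - eps (n + 1) i) ∨
         v = eps (n + 1) j + eps (n + 1) i ∨ v = -(eps (n + 1) j + eps (n + 1) i))}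

def htD (n : ℕ) (v : Fin (n + 1) → ℝ) : ℝ := ∑ i : Fin (n + 1), v i * (i : ℝ)

lemma htD_eps (n : ℕ) (k : Fin (n+1)) : htD n (eps (n+1) k) = k := by
  simp [htD, eps, ite_mul, Finset.sum_ite_eq']

lemma htD_sub (n : ℕ) (u v : Fin (n+1) → ℝ) : htD n (u - v) = htD n u - htD n v := by
  simp [htD, sub_mul, Finset.sum_sub_distrib]

lemma htD_add (n : ℕ) (u v : Fin (n+1) → ℝ) : htD n (u + v) = htD n u + htD n v := by
  simp [htD, add_mul, Finset.sum_add_distrib]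

lemma htD_neg (n : ℕ) (u : Fin (n+1) → ℝ) : htD n (-u) = - htD n u := by
  simp [htD]

/-- A difference root of height exactly `m` lies in the generating set. -/
lemma diff_base (n m : ℕ) (a b : ℕ) (ha : a < n+1) (hb : b < n+1) (hab : a < b)
    (h : b - a = m) :
    eps (n+1) ⟨b, hb⟩ - eps (n+1) ⟨a, ha⟩ ∈ {u ∈ Droots n | htD n u = (m : ℝ)} := by
  refine ⟨⟨⟨a, ha⟩, ⟨b, hb⟩, hab, Or.inl rfl⟩, ?_⟩
  rw [htD_sub, htD_eps, htD_eps]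
  have hc : ((b - a : ℕ) : ℝ) = (b : ℝ) - a := Nat.cast_sub (le_of_lt hab)
  simp only [Fin.val_mk]
  rw [← hc, h]

lemma sum_base (n m : ℕ) (a b : ℕ) (ha : a < n+1) (hb : b < n+1) (hab : a < b)
    (h : a + b = m) :
    eps (n+1) ⟨b, hb⟩ + eps (n+1) ⟨a, ha⟩ ∈ {u ∈ Droots n | htD n u = (m : ℝ)} := by
  refine ⟨⟨⟨a, ha⟩, ⟨b, hb⟩, hab, Or.inr (Or.inr (Or.inl rfl))⟩, ?_⟩
  rw [htD_add, htD_eps, htD_eps]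
  push_cast [← h]
  ring

/-- Difference roots with height divisible by `m` are sums of height-`m` roots. -/
lemma diff_mem (n m : ℕ) (hm : 1 ≤ m) :
    ∀ k, ∀ a b : ℕ, ∀ ha : a < n+1, ∀ hb : b < n+1, a < b → b - a = m * k →
    eps (n+1) ⟨b, hb⟩ - eps (n+1) ⟨a, ha⟩ ∈
      AddSubmonoid.closure {u ∈ Droots n | htD n u = (m : ℝ)} := by
  intro k
  induction k with
  | zero => intro a b ha hb hab h; omega
  | succ k ih =>
    intro a b ha hb hab h
    rcases Nat.eq_zero_or_pos k with rfl | hk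
    · exact AddSubmonoid.subset_closure (diff_base n m a b ha hb hab (by omega))
    · have hba : b - a = m * k + m := by rw [h]; ring
      have hk2 : m ≤ m * k := Nat.le_mul_of_pos_right _ hk
      have hc : a < b - m := by omega
      have hc2 : b - m < n + 1 := by omega
      have key : eps (n+1) ⟨b, hb⟩ - eps (n+1) ⟨a, ha⟩ =
          (eps (n+1) ⟨b, hb⟩ - eps (n+1) ⟨b - m, hc2⟩) +
          (eps (n+1) ⟨b - m, hc2⟩ - eps (n+1) ⟨a, ha⟩) := by abel
      rw [key]
      refine AddSubmonoid.add_mem _ ?_ ?_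
      · exact AddSubmonoid.subset_closure
          (diff_base n m (b - m) b hc2 hb (by omega) (by omega))
      · exact ih a (b - m) ha hc2 hc (by omega)

/-- Sum roots with height divisible by `m` are sums of height-`m` roots. -/
lemma Dsum_mem (n m : ℕ) (hm : 1 ≤ m) (hcase : Odd m ∨ 2 * n < 3 * m) :
    ∀ N : ℕ, ∀ a b : ℕ, ∀ ha : a < n+1, ∀ hb : b < n+1, a < b → a + b = N → m ∣ N →
    eps (n+1) ⟨b, hb⟩ + eps (n+1) ⟨a, ha⟩ ∈
      AddSubmonoid.closure {u ∈ Droots n | htD n u = (m : ℝ)} := by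
  intro N
  induction N using Nat.strong_induction_on with
  | _ N ih =>
    intro a b ha hb hab hN hdvd
    obtain ⟨q, hq⟩ := hdvd
    have hq1 : 1 ≤ q := by
      rcases Nat.eq_zero_or_pos q with rfl | h; · simp at hq; omega
      · exact h
    rcases eq_or_lt_of_le hq1 with rfl | hq2
    · exact AddSubmonoid.subset_closure (sum_base n m a b ha hb hab (by omega))
    · have hN2 : 2 * m ≤ N := by
        calc 2 * m = m * 2 := by ring
        _ ≤ m * q := Nat.mul_le_mul_left m hq2
        _ = N := hq.symm
      have hsplit : m * (q - 1) + m = N := by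
        rw [hq]; cases q with
        | zero => omega
        | succ q' => simp [Nat.mul_succ]
      by_cases hma : m ≤ a
      · -- reduce a by m
        have hc2 : a - m < n + 1 := by omega
        have key : eps (n+1) ⟨b, hb⟩ + eps (n+1) ⟨a, ha⟩ =
            (eps (n+1) ⟨b, hb⟩ + eps (n+1) ⟨a - m, hc2⟩) +
            (eps (n+1) ⟨a, ha⟩ - eps (n+1) ⟨a - m, hc2⟩) := by abel
        rw [key]
        refine AddSubmonoid.add_mem _ ?_ ?_
        · exact ih (N - m) (by omega) (a - m) b hc2 hb (by omega) (by omega) ⟨q - 1, by omega⟩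
        · exact AddSubmonoid.subset_closure
            (diff_base n m (a - m) a hc2 ha (by omega) (by omega))
      · -- a < m : reduce b by m
        push_neg at hma
        have hbm : m < b := by omega
        have hc2 : b - m < n + 1 := by omega
        have hne : b - m ≠ a := by
          intro hEq
          have hbam : b = a + m := by omega
          have hNeq : N = 2 * a + m := by omega
          rcases hcase with hodd | heven
          · have h2a : m ∣ 2 * a := by
              have : m ∣ N - m := ⟨q - 1, by omega⟩
              simpa [hNeq, Nat.add_sub_cancel] using this
            have hcop : Nat.Coprime m 2 := hodd.coprime_two_right
            have : m ∣ a := hcop.dvd_of_dvd_mul_left h2a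
            have : a = 0 := by
              rcases this with ⟨s, hs⟩
              rcases Nat.eq_zero_or_pos s with rfl | hs1
              · omega
              · have : m ≤ m * s := Nat.le_mul_of_pos_right _ hs1
                omega
            omega
          · omega
        have key : eps (n+1) ⟨b, hb⟩ + eps (n+1) ⟨a, ha⟩ =
            (eps (n+1) ⟨b, hb⟩ - eps (n+1) ⟨b - m, hc2⟩) +
            (eps (n+1) ⟨b - m, hc2⟩ + eps (n+1) ⟨a, ha⟩) := by abel
        rw [key]
        refine AddSubmonoid.add_mem _ (AddSubmonoid.subset_closure
          (diff_base n m (b - m) b hc2 hb (by omega) (by omega))) ?_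
        rcases Nat.lt_or_ge a (b - m) with hlt | hge
        · exact ih (N - m) (by omega) a (b - m) ha hc2 hlt (by omega) ⟨q - 1, by omega⟩
        · have hgt : b - m < a := by omega
          have := ih (N - m) (by omega) (b - m) a hc2 ha hgt (by omega) ⟨q - 1, by omega⟩
          rw [add_comm (eps (n + 1) ⟨b - m, hc2⟩) (eps (n + 1) ⟨a, ha⟩)]
          exact this

/-- let `n ≥ 3` and `m ≥ 2` with `m` odd or `3m > 2n`. Then every
positive root of `D_{n+1}` whose height is divisible by `m` is a sum of roots of
height exactly `m`. -/
theorem stmt7 (n : ℕ) (hn : 3 ≤ n) (m : ℕ) (hm : 2 ≤ m)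
    (hcase : Odd m ∨ 2 * n < 3 * m) :
    ∀ v ∈ Droots n, 0 < htD n v → (∃ l : ℤ, htD n v = (m : ℝ) * l) →
      v ∈ AddSubmonoid.closure {u ∈ Droots n | htD n u = (m : ℝ)} := by
  intro v hv hpos hdvd
  obtain ⟨i, j, hij, hcs⟩ := hv
  have hij' : (i : ℕ) < (j : ℕ) := hij
  obtain ⟨l, hl⟩ := hdvd
  rcases hcs with h | h | h | h
  · -- v = eps j - eps i
    rw [h, htD_sub, htD_eps, htD_eps] at hl
    have hz : ((j : ℕ) : ℤ) - ((i : ℕ) : ℤ) = (m : ℤ) * l := by exact_mod_cast hl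
    have hd : (m : ℤ) ∣ (((j : ℕ) - (i : ℕ) : ℕ) : ℤ) := by
      rw [Nat.cast_sub hij'.le]; exact ⟨l, hz⟩
    have hnat : m ∣ (j : ℕ) - (i : ℕ) := by exact_mod_cast hd
    obtain ⟨k, hk⟩ := hnat
    rw [h]
    exact diff_mem n m (by omega) k i j i.isLt j.isLt hij' hk
  · -- v = -(eps j - eps i) : negative height
    exfalso
    rw [h, htD_neg, htD_sub, htD_eps, htD_eps] at hpos
    have : ((i : ℕ) : ℝ) < ((j : ℕ) : ℝ) := by exact_mod_cast hij'
    push_cast at hpos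
    linarith
  · -- v = eps j + eps i
    rw [h, htD_add, htD_eps, htD_eps] at hl
    have hz : ((j : ℕ) : ℤ) + ((i : ℕ) : ℤ) = (m : ℤ) * l := by exact_mod_cast hl
    have hnat : m ∣ (i : ℕ) + (j : ℕ) := by
      have : (m : ℤ) ∣ (((i : ℕ) + (j : ℕ) : ℕ) : ℤ) := ⟨l, by push_cast; linarith [hz]⟩
      exact_mod_cast this
    rw [h]
    exact Dsum_mem n m (by omega) hcase ((i : ℕ) + (j : ℕ)) i j i.isLt j.isLt hij' rfl hnat
  · -- v = -(eps j + eps i) : negative height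
    exfalso
    rw [h, htD_neg, htD_add, htD_eps, htD_eps] at hpos
    have h1 : (0 : ℝ) ≤ ((i : ℕ) : ℝ) := by positivity
    have h2 : (0 : ℝ) < ((j : ℕ) : ℝ) := by exact_mod_cast Nat.pos_of_ne_zero (by omega)
    push_cast at hpos
    linarith
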